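/- The affine space f + s, with f = E₂₁ + E₃₂ and s = ℂe₁ ⊕ ℂe_θ (companion matrices), is a transversal space: every element of f + b₊ is in the orbit of f + s under the unipotent group N = exp(n₊) acting by conjugation (exp y).g = Σ_{k≥0}(ad_y)^k g / k!, and for s ∈ s, (exp y).(f + s) ∈ f + s implies y = 0. -/
import Mathlib

set_option maxHeartbeats 1000000

open Matrix

private noncomputable def adM (x z w : ℂ) : Matrix (Fin 3) (Fin 3) ℂ → Matrix (Fin 3) (Fin 3) ℂ :=
  fun m => !![0,x,z; 0,0,w; 0,0,0] * m - m * !![0,x,z; 0,0,w; 0,0,0]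

private lemma ad1 (x z w a c : ℂ) :
    adM x z w !![0,a,c; 1,0,0; 0,1,0] = !![x, z, -(w*a); 0, w-x, -z; 0, 0, -w] := by
  ext i j
  fin_cases i <;> fin_cases j <;>
    simp [adM, Matrix.mul_apply, Fin.sum_univ_three, Matrix.vecHead, Matrix.vecTail] <;> ring

private lemma ad2 (x z w a : ℂ) :
    adM x z w !![x, z, -(w*a); 0, w-x, -z; 0, 0, -w] =
      !![0, x*w-2*x^2, -2*z*w-2*x*z; 0, 0, -2*w^2+x*w; 0, 0, 0] := by
  ext i j
  fin_cases i <;> fin_cases j <;>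
    simp [adM, Matrix.mul_apply, Fin.sum_univ_three, Matrix.vecHead, Matrix.vecTail] <;> ring

private lemma ad3 (x z w : ℂ) :
    adM x z w !![0, x*w-2*x^2, -2*z*w-2*x*z; 0, 0, -2*w^2+x*w; 0, 0, 0] =
      !![0, 0, -3*x*w^2+3*x^2*w; 0, 0, 0; 0, 0, 0] := by
  ext i j
  fin_cases i <;> fin_cases j <;>
    simp [adM, Matrix.mul_apply, Fin.sum_univ_three, Matrix.vecHead, Matrix.vecTail] <;> ring

private lemma ad4 (x z w : ℂ) :
    adM x z w !![0, 0, -3*x*w^2+3*x^2*w; 0, 0, 0; 0, 0, 0] = 0 := by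
  ext i j
  fin_cases i <;> fin_cases j <;>
    simp [adM, Matrix.mul_apply, Fin.sum_univ_three, Matrix.vecHead, Matrix.vecTail] <;> ring

private lemma act_formula (x z w a c : ℂ) :
    (∑' k : ℕ, ((k.factorial : ℂ)⁻¹) •
      ((fun m => (!![0,x,z; 0,0,w; 0,0,0] : Matrix (Fin 3) (Fin 3) ℂ) * m
        - m * !![0,x,z; 0,0,w; 0,0,0])^[k] (!![0,a,c; 1,0,0; 0,1,0]))) =
    !![x, a+z+x*w/2-x^2, c-w*a-z*w-x*w^2/2-x*z+x^2*w/2;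
       1, w-x, -w^2-z+x*w/2;
       0, 1, -w] := by
  have hfun : (fun m => (!![0,x,z; 0,0,w; 0,0,0] : Matrix (Fin 3) (Fin 3) ℂ) * m
      - m * !![0,x,z; 0,0,w; 0,0,0]) = adM x z w := rfl
  rw [hfun]
  have had0 : adM x z w 0 = 0 := by simp [adM]
  have hiter0 : ∀ n : ℕ, (adM x z w)^[n] (0 : Matrix (Fin 3) (Fin 3) ℂ) = 0 := by
    intro n
    induction n with
    | zero => rfl
    | succ n ih => rw [Function.iterate_succ_apply', ih, had0]
  have h4' : (adM x z w)^[4] (!![0,a,c; 1,0,0; 0,1,0]) = 0 := by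
    show adM x z w (adM x z w (adM x z w (adM x z w !![0,a,c; 1,0,0; 0,1,0]))) = 0
    rw [ad1, ad2, ad3, ad4]
  have hzero : ∀ k : ℕ, k ∉ Finset.range 4 →
      ((k.factorial : ℂ)⁻¹) • ((adM x z w)^[k] (!![0,a,c; 1,0,0; 0,1,0])) = 0 := by
    intro k hk
    rw [Finset.mem_range, not_lt] at hk
    obtain ⟨n, rfl⟩ := Nat.exists_eq_add_of_le hk
    rw [add_comm, Function.iterate_add_apply, h4', hiter0, smul_zero]
  rw [tsum_eq_sum hzero]
  have e0 : (adM x z w)^[0] (!![0,a,c; 1,0,0; 0,1,0]) = !![0,a,c; 1,0,0; 0,1,0] := rfl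
  have e1 : (adM x z w)^[1] (!![0,a,c; 1,0,0; 0,1,0]) =
      !![x, z, -(w*a); 0, w-x, -z; 0, 0, -w] := ad1 x z w a c
  have e2 : (adM x z w)^[2] (!![0,a,c; 1,0,0; 0,1,0]) =
      !![0, x*w-2*x^2, -2*z*w-2*x*z; 0, 0, -2*w^2+x*w; 0, 0, 0] := by
    show adM x z w (adM x z w _) = _; rw [ad1, ad2]
  have e3 : (adM x z w)^[3] (!![0,a,c; 1,0,0; 0,1,0]) =
      !![0, 0, -3*x*w^2+3*x^2*w; 0, 0, 0; 0, 0, 0] := by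
    show adM x z w (adM x z w (adM x z w _)) = _; rw [ad1, ad2, ad3]
  rw [show (4 : ℕ) = 3 + 1 from rfl, Finset.sum_range_succ, Finset.sum_range_succ,
    Finset.sum_range_succ, Finset.sum_range_one, e0, e1, e2, e3]
  ext i j
  fin_cases i <;> fin_cases j <;>
    simp [Nat.factorial, Matrix.vecHead, Matrix.vecTail] <;> ring

/-- The companion-matrix affine space f + s, s = ℂe₁ ⊕ ℂe_θ, is a transversal space
for the action (exp y).g = Σ_{k≥0} (ad_y)^k g / k! of the unipotent group N = exp(n₊)
on f + b₊ in sl₃. -/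
theorem companion_space_is_transversal
    (f e₁ eθ : Matrix (Fin 3) (Fin 3) ℂ)
    (hf : f = !![0,0,0; 1,0,0; 0,1,0])
    (he₁ : e₁ = !![0,1,0; 0,0,0; 0,0,0])
    (heθ : eθ = !![0,0,1; 0,0,0; 0,0,0])
    (act : Matrix (Fin 3) (Fin 3) ℂ → Matrix (Fin 3) (Fin 3) ℂ → Matrix (Fin 3) (Fin 3) ℂ)
    (hact : ∀ y g, act y g =
      ∑' k : ℕ, ((k.factorial : ℂ)⁻¹) • ((fun m => y * m - m * y)^[k] g)) :
    -- the orbit of f + s under N covers f + b₊ :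
    (∀ b : Matrix (Fin 3) (Fin 3) ℂ,
      (∃ d₁ d₂ p q r : ℂ, b = !![d₁,p,q; 0,d₂,r; 0,0,-d₁-d₂]) →
      ∃ y : Matrix (Fin 3) (Fin 3) ℂ, (∃ p q r : ℂ, y = !![0,p,q; 0,0,r; 0,0,0]) ∧
        ∃ a c : ℂ, act y (f + a • e₁ + c • eθ) = f + b) ∧
    -- transversality: (exp y).(f + s) ∈ f + s forces y = 0 :
    (∀ y : Matrix (Fin 3) (Fin 3) ℂ, (∃ p q r : ℂ, y = !![0,p,q; 0,0,r; 0,0,0]) →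
      ∀ a c : ℂ, (∃ a' c' : ℂ, act y (f + a • e₁ + c • eθ) = f + a' • e₁ + c' • eθ) →
        y = 0) := by
  have key : ∀ x z w a c : ℂ,
      act !![0,x,z; 0,0,w; 0,0,0] (f + a • e₁ + c • eθ) =
      !![x, a+z+x*w/2-x^2, c-w*a-z*w-x*w^2/2-x*z+x^2*w/2;
         1, w-x, -w^2-z+x*w/2;
         0, 1, -w] := by
    intro x z w a c
    have hg : f + a • e₁ + c • eθ = !![0,a,c; 1,0,0; 0,1,0] := by
      subst hf he₁ heθ
      ext i j
      fin_cases i <;> fin_cases j <;> simp [Matrix.vecHead, Matrix.vecTail]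
    rw [hg, hact, act_formula]
  constructor
  · rintro b ⟨d₁, d₂, p, q, r, rfl⟩
    refine ⟨!![0, d₁, d₁*(d₁+d₂)/2 - (d₁+d₂)^2 - r; 0, 0, d₁+d₂; 0, 0, 0],
      ⟨_, _, _, rfl⟩,
      p + d₁^2 - (d₁*(d₁+d₂)/2 - (d₁+d₂)^2 - r) - d₁*(d₁+d₂)/2,
      q + (d₁+d₂)*(p + d₁^2 - (d₁*(d₁+d₂)/2 - (d₁+d₂)^2 - r) - d₁*(d₁+d₂)/2)
        + (d₁*(d₁+d₂)/2 - (d₁+d₂)^2 - r)*(d₁+d₂) + d₁*(d₁+d₂)^2/2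
        + d₁*(d₁*(d₁+d₂)/2 - (d₁+d₂)^2 - r) - d₁^2*(d₁+d₂)/2, ?_⟩
    rw [key, hf]
    ext i j
    fin_cases i <;> fin_cases j <;>
      simp [Matrix.vecHead, Matrix.vecTail] <;> ring
  · rintro y ⟨x, z, w, rfl⟩ a c ⟨a', c', hconj⟩
    rw [key, hf, he₁, heθ] at hconj
    have h11 : x = 0 := by
      have := congrFun (congrFun hconj 0) 0
      simpa [Matrix.vecHead, Matrix.vecTail] using this
    have h33 : -w = 0 := by
      have := congrFun (congrFun hconj 2) 2
      simpa [Matrix.vecHead, Matrix.vecTail] using this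
    have hw0 : w = 0 := by linear_combination -h33
    have h23 : -w^2 - z + x*w/2 = 0 := by
      have := congrFun (congrFun hconj 1) 2
      simpa [Matrix.vecHead, Matrix.vecTail] using this
    have hz0 : z = 0 := by
      rw [h11, hw0] at h23
      linear_combination -h23
    rw [h11, hz0, hw0]
    ext i j
    fin_cases i <;> fin_cases j <;> simp [Matrix.vecHead, Matrix.vecTail]
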